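/- Fix l > 1, m > 1, and set n = l + m. Let G be the graph on vertex set {1,…,n+1} whose edges are: all pairs {i,j} with i ∈ {1,…,l} and j ∈ {l+1,…,n} (a copy of K_{l,m}), together with the single edge {1, n+1}. Let G' be the graph on {1,…,n+1} whose edges are all pairs {i,j} with i ∈ {1,…,l} and j ∈ {l+1,…,n+1} (a copy of K_{l,m+1}, the extra vertex n+1 being joined to all l vertices of the first part). Then for every k ∈ {2, 4, 6, 14}, 𝔞_k^G = 𝔞_k^{G'}. -/

import Mathlib

open Matrix DirectSum

attribute [local instance 100] LieRing.ofAssociativeRing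

noncomputable section

/-- The identity Pauli matrix `I`. -/
def PauliI : Matrix (Fin 2) (Fin 2) ℂ := 1

/-- The Pauli matrix `X`. -/
def PauliX : Matrix (Fin 2) (Fin 2) ℂ := !![0, 1; 1, 0]

/-- The Pauli matrix `Y`. -/
def PauliY : Matrix (Fin 2) (Fin 2) ℂ := !![0, -Complex.I; Complex.I, 0]

/-- The Pauli matrix `Z`. -/
def PauliZ : Matrix (Fin 2) (Fin 2) ℂ := !![1, 0; 0, -1]

/-- The `n`-fold Kronecker product of the 2×2 matrices `A 0, …, A (n-1)`, realized as a
matrix indexed by `Fin n → Fin 2` (a type of cardinality `2^n`). -/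
def pauliString {n : ℕ} (A : Fin n → Matrix (Fin 2) (Fin 2) ℂ) :
    Matrix (Fin n → Fin 2) (Fin n → Fin 2) ℂ :=
  Matrix.of fun x y => ∏ k, A k (x k) (y k)

/-- The Pauli string `A_i B_j` with `A` at site `i`, `B` at site `j`, and identity elsewhere. -/
def twoLocal {n : ℕ} (A B : Matrix (Fin 2) (Fin 2) ℂ) (i j : Fin n) :
    Matrix (Fin n → Fin 2) (Fin n → Fin 2) ℂ :=
  pauliString (fun k => if k = i then A else if k = j then B else PauliI)

/-- The Pauli string `A_i` with `A` at site `i` and identity elsewhere. -/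
def oneLocal {n : ℕ} (A : Matrix (Fin 2) (Fin 2) ℂ) (i : Fin n) :
    Matrix (Fin n → Fin 2) (Fin n → Fin 2) ℂ :=
  pauliString (fun k => if k = i then A else PauliI)

/-- The generating sets `𝒜_k` (a pair `(a, b)` stands for `a ⊗ b`). -/
def genSet : ℕ → Set (Matrix (Fin 2) (Fin 2) ℂ × Matrix (Fin 2) (Fin 2) ℂ)
  | 2 => {(PauliX, PauliY), (PauliY, PauliX)}
  | 4 => {(PauliX, PauliX), (PauliY, PauliY)}
  | 6 => {(PauliX, PauliX), (PauliY, PauliZ), (PauliZ, PauliY)}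
  | 7 => {(PauliX, PauliX), (PauliY, PauliY), (PauliZ, PauliZ)}
  | 14 => {(PauliX, PauliX), (PauliY, PauliY), (PauliX, PauliY), (PauliY, PauliX)}
  | 16 => {(PauliX, PauliY), (PauliY, PauliX), (PauliY, PauliZ), (PauliZ, PauliY)}
  | 20 => {(PauliX, PauliX), (PauliY, PauliY), (PauliY, PauliZ), (PauliZ, PauliY)}
  | 22 => {(PauliX, PauliX), (PauliX, PauliY), (PauliY, PauliX), (PauliX, PauliZ), (PauliZ, PauliX)}
  | _ => ∅

/-- The dynamical Lie algebra `𝔞_k^G`: the smallest real Lie subalgebra of the `2^n × 2^n`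
complex matrices containing `i·(a_i · b_j)` for every edge `{i, j}` of `G` and every pair
`(a, b)` with `a ⊗ b ∈ 𝒜_k`. -/
def dla (k : ℕ) {n : ℕ} (G : SimpleGraph (Fin n)) :
    LieSubalgebra ℝ (Matrix (Fin n → Fin 2) (Fin n → Fin 2) ℂ) :=
  LieSubalgebra.lieSpan ℝ _
    {M | ∃ i j : Fin n, G.Adj i j ∧ ∃ p ∈ genSet k, M = Complex.I • twoLocal p.1 p.2 i j}

/-- The complete bipartite graph `K_{l,m}` on `{1, …, l + m + 1}` (parts `{1, …, l}` and
`{l + 1, …, l + m}`), together with one extra edge joining vertex `1` to the extra vertex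
`l + m + 1`. -/
def KbipPlusPendant (l m : ℕ) : SimpleGraph (Fin (l + m + 1)) :=
  SimpleGraph.fromRel (fun i j =>
    ((i : ℕ) < l ∧ l ≤ (j : ℕ) ∧ (j : ℕ) < l + m) ∨ ((i : ℕ) = 0 ∧ (j : ℕ) = l + m))

/-- The complete bipartite graph `K_{l,m+1}` on `{1, …, l + m + 1}`, with parts `{1, …, l}` and
`{l + 1, …, l + m + 1}`. -/
def KbipExtended (l m : ℕ) : SimpleGraph (Fin (l + m + 1)) :=
  SimpleGraph.fromRel (fun i j => (i : ℕ) < l ∧ l ≤ (j : ℕ))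

set_option maxHeartbeats 1600000

-- label level
def pl : Fin 4 → Matrix (Fin 2) (Fin 2) ℂ
  | ⟨0, _⟩ => PauliI
  | ⟨1, _⟩ => PauliX
  | ⟨2, _⟩ => PauliY
  | ⟨3, _⟩ => PauliZ

@[simp] lemma pl0 : pl 0 = PauliI := rfl
@[simp] lemma pl1 : pl 1 = PauliX := rfl
@[simp] lemma pl2 : pl 2 = PauliY := rfl
@[simp] lemma pl3 : pl 3 = PauliZ := rfl

def pmulL (a b : Fin 4) : Fin 4 := ⟨(a.val ^^^ b.val) % 4, Nat.mod_lt _ (by norm_num)⟩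

def pmulC (a b : Fin 4) : ℂ :=
  if a = 0 ∨ b = 0 ∨ a = b then 1
  else if (a, b) = (1, 2) ∨ (a, b) = (2, 3) ∨ (a, b) = (3, 1) then Complex.I
  else -Complex.I

lemma pmulL_comm : ∀ a b : Fin 4, pmulL a b = pmulL b a := by decide

lemma pmulC_rev (a b : Fin 4) : pmulC b a = (starRingEnd ℂ) (pmulC a b) := by
  fin_cases a <;> fin_cases b <;> simp [pmulC]

lemma pl_mul (a b : Fin 4) : pl a * pl b = pmulC a b • pl (pmulL a b) := by
  fin_cases a <;> fin_cases b <;>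
    · show _ = pmulC _ _ • _
      simp only [pmulC, pmulL]
      norm_num
      ext x y
      fin_cases x <;> fin_cases y <;>
        simp [pl, PauliI, PauliX, PauliY, PauliZ, Matrix.mul_apply, Fin.sum_univ_two,
          Complex.ext_iff]

lemma pauliString_mul {n : ℕ} (A B : Fin n → Matrix (Fin 2) (Fin 2) ℂ) :
    pauliString A * pauliString B = pauliString fun k => A k * B k := by
  ext x y
  simp only [pauliString, Matrix.mul_apply, Matrix.of_apply]
  rw [Fintype.prod_sum fun k t => A k (x k) t * B k t (y k)]
  exact Finset.sum_congr rfl fun z _ => (Finset.prod_mul_distrib).symm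

lemma pauliString_smul {n : ℕ} (c : Fin n → ℂ) (B : Fin n → Matrix (Fin 2) (Fin 2) ℂ) :
    pauliString (fun k => c k • B k) = (∏ k, c k) • pauliString B := by
  ext x y
  simp only [pauliString, Matrix.of_apply, Matrix.smul_apply, Matrix.smul_apply, smul_eq_mul]
  rw [← Finset.prod_mul_distrib]

def lstr {n : ℕ} (f : Fin n → Fin 4) : Matrix (Fin n → Fin 2) (Fin n → Fin 2) ℂ :=
  pauliString fun k => pl (f k)

lemma pauliString_congr {n : ℕ} {A B : Fin n → Matrix (Fin 2) (Fin 2) ℂ} (h : A = B) :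
    pauliString A = pauliString B := by rw [h]

lemma lstr_mul {n : ℕ} (f g : Fin n → Fin 4) :
    lstr f * lstr g = (∏ k, pmulC (f k) (g k)) • lstr fun k => pmulL (f k) (g k) := by
  rw [lstr, lstr, pauliString_mul,
    pauliString_congr (funext fun k => pl_mul (f k) (g k)), pauliString_smul]
  rfl

def chain5 {N : ℕ} (v0 v1 v2 v3 v4 : Fin N) (a0 a1 a2 a3 a4 : Fin 4) : Fin N → Fin 4 :=
  fun k => if k = v0 then a0 else if k = v1 then a1 else if k = v2 then a2 else
    if k = v3 then a3 else if k = v4 then a4 else 0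

lemma chain5_map2 {N : ℕ} (v0 v1 v2 v3 v4 : Fin N) (F : Fin 4 → Fin 4 → Fin 4)
    (hF : F 0 0 = 0) (a0 a1 a2 a3 a4 b0 b1 b2 b3 b4 : Fin 4) :
    (fun k => F (chain5 v0 v1 v2 v3 v4 a0 a1 a2 a3 a4 k) (chain5 v0 v1 v2 v3 v4 b0 b1 b2 b3 b4 k))
      = chain5 v0 v1 v2 v3 v4 (F a0 b0) (F a1 b1) (F a2 b2) (F a3 b3) (F a4 b4) := by
  funext k
  simp only [chain5]
  split_ifs <;> simp [hF]

lemma prod_chain5 {N : ℕ} {M : Type*} [CommMonoid M] {v0 v1 v2 v3 v4 : Fin N}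
    (h01 : v0 ≠ v1) (h02 : v0 ≠ v2) (h03 : v0 ≠ v3) (h04 : v0 ≠ v4)
    (h12 : v1 ≠ v2) (h13 : v1 ≠ v3) (h14 : v1 ≠ v4)
    (h23 : v2 ≠ v3) (h24 : v2 ≠ v4) (h34 : v3 ≠ v4)
    (F : Fin 4 → Fin 4 → M) (hF : F 0 0 = 1) (a0 a1 a2 a3 a4 b0 b1 b2 b3 b4 : Fin 4) :
    ∏ k, F (chain5 v0 v1 v2 v3 v4 a0 a1 a2 a3 a4 k) (chain5 v0 v1 v2 v3 v4 b0 b1 b2 b3 b4 k)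
      = F a0 b0 * F a1 b1 * F a2 b2 * F a3 b3 * F a4 b4 := by
  rw [← Finset.prod_subset (Finset.subset_univ ({v0, v1, v2, v3, v4} : Finset (Fin N)))
    (by
      intro x _ hx
      simp only [Finset.mem_insert, Finset.mem_singleton, not_or] at hx
      obtain ⟨hx0, hx1, hx2, hx3, hx4⟩ := hx
      simp [chain5, hx0, hx1, hx2, hx3, hx4, hF])]
  rw [Finset.prod_insert (by simp [h01, h02, h03, h04]),
    Finset.prod_insert (by simp [h12, h13, h14]),
    Finset.prod_insert (by simp [h23, h24]),
    Finset.prod_insert (by simp [h34]), Finset.prod_singleton]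
  simp only [chain5, if_pos rfl, if_neg (Ne.symm h01), if_neg (Ne.symm h02),
    if_neg (Ne.symm h03), if_neg (Ne.symm h04), if_neg (Ne.symm h12), if_neg (Ne.symm h13),
    if_neg (Ne.symm h14), if_neg (Ne.symm h23), if_neg (Ne.symm h24), if_neg (Ne.symm h34), if_true]
  simp [mul_assoc]

lemma real_smul_aux (r : ℝ) (c : ℂ) {α β : Type*} [Fintype α] [Fintype β]
    [DecidableEq α] [DecidableEq β] (X : Matrix α β ℂ) :
    r • (c • X) = ((r : ℂ) * c) • X := by
  rw [← algebraMap_smul ℂ r (c • X), smul_smul, Complex.coe_algebraMap]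


@[simp] lemma pC00 : pmulC 0 0 = 1 := by simp [pmulC]
@[simp] lemma pC01 : pmulC 0 1 = 1 := by simp [pmulC]
@[simp] lemma pC02 : pmulC 0 2 = 1 := by simp [pmulC]
@[simp] lemma pC03 : pmulC 0 3 = 1 := by simp [pmulC]
@[simp] lemma pC10 : pmulC 1 0 = 1 := by simp [pmulC]
@[simp] lemma pC11 : pmulC 1 1 = 1 := by simp [pmulC]
@[simp] lemma pC12 : pmulC 1 2 = Complex.I := by simp [pmulC]
@[simp] lemma pC13 : pmulC 1 3 = -Complex.I := by simp [pmulC]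
@[simp] lemma pC20 : pmulC 2 0 = 1 := by simp [pmulC]
@[simp] lemma pC21 : pmulC 2 1 = -Complex.I := by simp [pmulC]
@[simp] lemma pC22 : pmulC 2 2 = 1 := by simp [pmulC]
@[simp] lemma pC23 : pmulC 2 3 = Complex.I := by simp [pmulC]
@[simp] lemma pC30 : pmulC 3 0 = 1 := by simp [pmulC]
@[simp] lemma pC31 : pmulC 3 1 = Complex.I := by simp [pmulC]
@[simp] lemma pC32 : pmulC 3 2 = -Complex.I := by simp [pmulC]
@[simp] lemma pC33 : pmulC 3 3 = 1 := by simp [pmulC]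

lemma gen_mem {N K : ℕ} {G : SimpleGraph (Fin N)} {u v : Fin N} (huv : G.Adj u v)
    {a b : Fin 4} (hab : (pl a, pl b) ∈ genSet K) {f : Fin N → Fin 4}
    (hf : (fun kk => if kk = u then pl a else if kk = v then pl b else PauliI) = fun kk => pl (f kk)) :
    Complex.I • lstr f ∈ dla K G := by
  have h2 : twoLocal (pl a) (pl b) u v = lstr f := pauliString_congr hf
  exact LieSubalgebra.subset_lieSpan ⟨u, v, huv, (pl a, pl b), hab, by rw [h2]⟩

lemma bstep5 {N : ℕ} (L : LieSubalgebra ℝ (Matrix (Fin N → Fin 2) (Fin N → Fin 2) ℂ))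
    {v0 v1 v2 v3 v4 : Fin N}
    (h01 : v0 ≠ v1) (h02 : v0 ≠ v2) (h03 : v0 ≠ v3) (h04 : v0 ≠ v4)
    (h12 : v1 ≠ v2) (h13 : v1 ≠ v3) (h14 : v1 ≠ v4)
    (h23 : v2 ≠ v3) (h24 : v2 ≠ v4) (h34 : v3 ≠ v4)
    {a0 a1 a2 a3 a4 b0 b1 b2 b3 b4 c0 c1 c2 c3 c4 : Fin 4} {e : ℝ}
    (ha : Complex.I • lstr (chain5 v0 v1 v2 v3 v4 a0 a1 a2 a3 a4) ∈ L)
    (hb : Complex.I • lstr (chain5 v0 v1 v2 v3 v4 b0 b1 b2 b3 b4) ∈ L)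
    (hc : (c0, c1, c2, c3, c4) = (pmulL a0 b0, pmulL a1 b1, pmulL a2 b2, pmulL a3 b3, pmulL a4 b4))
    (he : e = 1 ∨ e = -1)
    (hp : pmulC a0 b0 * pmulC a1 b1 * pmulC a2 b2 * pmulC a3 b3 * pmulC a4 b4
        = (e : ℂ) * Complex.I) :
    Complex.I • lstr (chain5 v0 v1 v2 v3 v4 c0 c1 c2 c3 c4) ∈ L := by
  obtain ⟨rfl, rfl, rfl, rfl, rfl⟩ : c0 = pmulL a0 b0 ∧ c1 = pmulL a1 b1 ∧ c2 = pmulL a2 b2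
      ∧ c3 = pmulL a3 b3 ∧ c4 = pmulL a4 b4 := by
    simpa [Prod.ext_iff] using hc
  set f := chain5 v0 v1 v2 v3 v4 a0 a1 a2 a3 a4 with hfdef
  set g := chain5 v0 v1 v2 v3 v4 b0 b1 b2 b3 b4 with hgdef
  set h := chain5 v0 v1 v2 v3 v4 (pmulL a0 b0) (pmulL a1 b1) (pmulL a2 b2) (pmulL a3 b3)
    (pmulL a4 b4) with hhdef
  have hfg : lstr f * lstr g = ((e : ℂ) * Complex.I) • lstr h := by
    rw [lstr_mul, hfdef, hgdef,
      chain5_map2 v0 v1 v2 v3 v4 pmulL (by decide),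
      prod_chain5 h01 h02 h03 h04 h12 h13 h14 h23 h24 h34 pmulC (by simp [pmulC]), hp, hhdef]
  have hgf : lstr g * lstr f = (-((e : ℂ) * Complex.I)) • lstr h := by
    rw [lstr_mul, hfdef, hgdef,
      chain5_map2 v0 v1 v2 v3 v4 pmulL (by decide),
      prod_chain5 (M := ℂ) h01 h02 h03 h04 h12 h13 h14 h23 h24 h34 pmulC (by simp [pmulC])]
    have hrev : pmulC b0 a0 * pmulC b1 a1 * pmulC b2 a2 * pmulC b3 a3 * pmulC b4 a4
        = -((e : ℂ) * Complex.I) := by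
      rw [pmulC_rev a0 b0, pmulC_rev a1 b1, pmulC_rev a2 b2, pmulC_rev a3 b3, pmulC_rev a4 b4,
        ← _root_.map_mul, ← _root_.map_mul, ← _root_.map_mul, ← _root_.map_mul, hp,
        _root_.map_mul, Complex.conj_I, Complex.conj_ofReal]
      ring
    rw [hrev, hhdef]
    congr 1
    funext kk
    rw [pmulL_comm b0 a0, pmulL_comm b1 a1, pmulL_comm b2 a2, pmulL_comm b3 a3, pmulL_comm b4 a4]
  have hlie := L.lie_mem ha hb
  rw [Ring.lie_def, smul_mul_smul_comm, smul_mul_smul_comm, hfg, hgf, smul_smul, smul_smul] at hlie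
  have hscal : (Complex.I * Complex.I * ((e : ℂ) * Complex.I)) • lstr h
      - (Complex.I * Complex.I * -((e : ℂ) * Complex.I)) • lstr h
      = ((-2 * e : ℝ)) • (Complex.I • lstr h) := by
    rw [← sub_smul, real_smul_aux]
    congr 1
    rw [Complex.I_mul_I]
    push_cast
    ring
  rw [hscal] at hlie
  have he' : (-2 * e : ℝ) ≠ 0 := by rcases he with rfl | rfl <;> norm_num
  have := L.smul_mem (-2 * e : ℝ)⁻¹ hlie
  rwa [smul_smul, inv_mul_cancel₀ he', one_smul] at this


lemma targ2 (l m : ℕ) (hl : 1 < l) (hm : 1 < m) (v0 v1 v2 v3 v4 : Fin (l + m + 1))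
    (e0 : (v0 : ℕ) = 0) (e1a : 0 < (v1 : ℕ)) (e1b : (v1 : ℕ) < l)
    (e2 : (v2 : ℕ) = l) (e3 : (v3 : ℕ) = l + 1) (e4 : (v4 : ℕ) = l + m) :
    Complex.I • lstr (chain5 v0 v1 v2 v3 v4 0 1 0 0 2) ∈ dla 2 (KbipPlusPendant l m) ∧ Complex.I • lstr (chain5 v0 v1 v2 v3 v4 0 2 0 0 1) ∈ dla 2 (KbipPlusPendant l m) := by
  have h01 : v0 ≠ v1 := by simp only [Ne, Fin.ext_iff]; omega
  have h02 : v0 ≠ v2 := by simp only [Ne, Fin.ext_iff]; omega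
  have h03 : v0 ≠ v3 := by simp only [Ne, Fin.ext_iff]; omega
  have h04 : v0 ≠ v4 := by simp only [Ne, Fin.ext_iff]; omega
  have h12 : v1 ≠ v2 := by simp only [Ne, Fin.ext_iff]; omega
  have h13 : v1 ≠ v3 := by simp only [Ne, Fin.ext_iff]; omega
  have h14 : v1 ≠ v4 := by simp only [Ne, Fin.ext_iff]; omega
  have h23 : v2 ≠ v3 := by simp only [Ne, Fin.ext_iff]; omega
  have h24 : v2 ≠ v4 := by simp only [Ne, Fin.ext_iff]; omega
  have h34 : v3 ≠ v4 := by simp only [Ne, Fin.ext_iff]; omega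
  have adj02 : (KbipPlusPendant l m).Adj v0 v2 := by
    rw [KbipPlusPendant, SimpleGraph.fromRel_adj]
    exact ⟨h02, by omega⟩
  have adj03 : (KbipPlusPendant l m).Adj v0 v3 := by
    rw [KbipPlusPendant, SimpleGraph.fromRel_adj]
    exact ⟨h03, by omega⟩
  have adj12 : (KbipPlusPendant l m).Adj v1 v2 := by
    rw [KbipPlusPendant, SimpleGraph.fromRel_adj]
    exact ⟨h12, by omega⟩
  have adj13 : (KbipPlusPendant l m).Adj v1 v3 := by
    rw [KbipPlusPendant, SimpleGraph.fromRel_adj]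
    exact ⟨h13, by omega⟩
  have adj04 : (KbipPlusPendant l m).Adj v0 v4 := by
    rw [KbipPlusPendant, SimpleGraph.fromRel_adj]
    exact ⟨h04, by omega⟩
  have sIXYII : Complex.I • lstr (chain5 v0 v1 v2 v3 v4 0 1 2 0 0) ∈ dla 2 (KbipPlusPendant l m) :=
    gen_mem (a := 1) (b := 2) adj12 (by simp [genSet]) (by funext kk; simp only [chain5]; split_ifs <;> first | rfl | (exfalso; simp only [Fin.ext_iff] at *; omega))
  have sIYIXI : Complex.I • lstr (chain5 v0 v1 v2 v3 v4 0 2 0 1 0) ∈ dla 2 (KbipPlusPendant l m) :=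
    gen_mem (a := 2) (b := 1) adj13 (by simp [genSet]) (by funext kk; simp only [chain5]; split_ifs <;> first | rfl | (exfalso; simp only [Fin.ext_iff] at *; omega))
  have sIZYXI : Complex.I • lstr (chain5 v0 v1 v2 v3 v4 0 3 2 1 0) ∈ dla 2 (KbipPlusPendant l m) :=
    bstep5 _ h01 h02 h03 h04 h12 h13 h14 h23 h24 h34 sIXYII sIYIXI (by decide) (Or.inl rfl) (by simp <;> ring)
  have sIXIYI : Complex.I • lstr (chain5 v0 v1 v2 v3 v4 0 1 0 2 0) ∈ dla 2 (KbipPlusPendant l m) :=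
    gen_mem (a := 1) (b := 2) adj13 (by simp [genSet]) (by funext kk; simp only [chain5]; split_ifs <;> first | rfl | (exfalso; simp only [Fin.ext_iff] at *; omega))
  have sIYXII : Complex.I • lstr (chain5 v0 v1 v2 v3 v4 0 2 1 0 0) ∈ dla 2 (KbipPlusPendant l m) :=
    gen_mem (a := 2) (b := 1) adj12 (by simp [genSet]) (by funext kk; simp only [chain5]; split_ifs <;> first | rfl | (exfalso; simp only [Fin.ext_iff] at *; omega))
  have sIZXYI : Complex.I • lstr (chain5 v0 v1 v2 v3 v4 0 3 1 2 0) ∈ dla 2 (KbipPlusPendant l m) :=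
    bstep5 _ h01 h02 h03 h04 h12 h13 h14 h23 h24 h34 sIXIYI sIYXII (by decide) (Or.inl rfl) (by simp <;> ring)
  have sYIIXI : Complex.I • lstr (chain5 v0 v1 v2 v3 v4 2 0 0 1 0) ∈ dla 2 (KbipPlusPendant l m) :=
    gen_mem (a := 2) (b := 1) adj03 (by simp [genSet]) (by funext kk; simp only [chain5]; split_ifs <;> first | rfl | (exfalso; simp only [Fin.ext_iff] at *; omega))
  have sXIIYI : Complex.I • lstr (chain5 v0 v1 v2 v3 v4 1 0 0 2 0) ∈ dla 2 (KbipPlusPendant l m) :=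
    gen_mem (a := 1) (b := 2) adj03 (by simp [genSet]) (by funext kk; simp only [chain5]; split_ifs <;> first | rfl | (exfalso; simp only [Fin.ext_iff] at *; omega))
  have sXIIIY : Complex.I • lstr (chain5 v0 v1 v2 v3 v4 1 0 0 0 2) ∈ dla 2 (KbipPlusPendant l m) :=
    gen_mem (a := 1) (b := 2) adj04 (by simp [genSet]) (by funext kk; simp only [chain5]; split_ifs <;> first | rfl | (exfalso; simp only [Fin.ext_iff] at *; omega))
  have sYIXII : Complex.I • lstr (chain5 v0 v1 v2 v3 v4 2 0 1 0 0) ∈ dla 2 (KbipPlusPendant l m) :=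
    gen_mem (a := 2) (b := 1) adj02 (by simp [genSet]) (by funext kk; simp only [chain5]; split_ifs <;> first | rfl | (exfalso; simp only [Fin.ext_iff] at *; omega))
  have sYXZII : Complex.I • lstr (chain5 v0 v1 v2 v3 v4 2 1 3 0 0) ∈ dla 2 (KbipPlusPendant l m) :=
    bstep5 _ h01 h02 h03 h04 h12 h13 h14 h23 h24 h34 sIXYII sYIXII (by decide) (Or.inr rfl) (by simp <;> ring)
  have sZXZIY : Complex.I • lstr (chain5 v0 v1 v2 v3 v4 3 1 3 0 2) ∈ dla 2 (KbipPlusPendant l m) :=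
    bstep5 _ h01 h02 h03 h04 h12 h13 h14 h23 h24 h34 sXIIIY sYXZII (by decide) (Or.inl rfl) (by simp <;> ring)
  have sYXZYY : Complex.I • lstr (chain5 v0 v1 v2 v3 v4 2 1 3 2 2) ∈ dla 2 (KbipPlusPendant l m) :=
    bstep5 _ h01 h02 h03 h04 h12 h13 h14 h23 h24 h34 sXIIYI sZXZIY (by decide) (Or.inr rfl) (by simp <;> ring)
  have sIXZZY : Complex.I • lstr (chain5 v0 v1 v2 v3 v4 0 1 3 3 2) ∈ dla 2 (KbipPlusPendant l m) :=
    bstep5 _ h01 h02 h03 h04 h12 h13 h14 h23 h24 h34 sYIIXI sYXZYY (by decide) (Or.inl rfl) (by simp <;> ring)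
  have sIYYXY : Complex.I • lstr (chain5 v0 v1 v2 v3 v4 0 2 2 1 2) ∈ dla 2 (KbipPlusPendant l m) :=
    bstep5 _ h01 h02 h03 h04 h12 h13 h14 h23 h24 h34 sIZXYI sIXZZY (by decide) (Or.inl rfl) (by simp <;> ring)
  have sIXIIY : Complex.I • lstr (chain5 v0 v1 v2 v3 v4 0 1 0 0 2) ∈ dla 2 (KbipPlusPendant l m) :=
    bstep5 _ h01 h02 h03 h04 h12 h13 h14 h23 h24 h34 sIZYXI sIYYXY (by decide) (Or.inr rfl) (by simp <;> ring)
  have sYXIZI : Complex.I • lstr (chain5 v0 v1 v2 v3 v4 2 1 0 3 0) ∈ dla 2 (KbipPlusPendant l m) :=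
    bstep5 _ h01 h02 h03 h04 h12 h13 h14 h23 h24 h34 sIXIYI sYIIXI (by decide) (Or.inr rfl) (by simp <;> ring)
  have sXIYII : Complex.I • lstr (chain5 v0 v1 v2 v3 v4 1 0 2 0 0) ∈ dla 2 (KbipPlusPendant l m) :=
    gen_mem (a := 1) (b := 2) adj02 (by simp [genSet]) (by funext kk; simp only [chain5]; split_ifs <;> first | rfl | (exfalso; simp only [Fin.ext_iff] at *; omega))
  have sYIIIX : Complex.I • lstr (chain5 v0 v1 v2 v3 v4 2 0 0 0 1) ∈ dla 2 (KbipPlusPendant l m) :=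
    gen_mem (a := 2) (b := 1) adj04 (by simp [genSet]) (by funext kk; simp only [chain5]; split_ifs <;> first | rfl | (exfalso; simp only [Fin.ext_iff] at *; omega))
  have sZIIYX : Complex.I • lstr (chain5 v0 v1 v2 v3 v4 3 0 0 2 1) ∈ dla 2 (KbipPlusPendant l m) :=
    bstep5 _ h01 h02 h03 h04 h12 h13 h14 h23 h24 h34 sXIIYI sYIIIX (by decide) (Or.inl rfl) (by simp <;> ring)
  have sYIYYX : Complex.I • lstr (chain5 v0 v1 v2 v3 v4 2 0 2 2 1) ∈ dla 2 (KbipPlusPendant l m) :=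
    bstep5 _ h01 h02 h03 h04 h12 h13 h14 h23 h24 h34 sXIYII sZIIYX (by decide) (Or.inr rfl) (by simp <;> ring)
  have sIXYXX : Complex.I • lstr (chain5 v0 v1 v2 v3 v4 0 1 2 1 1) ∈ dla 2 (KbipPlusPendant l m) :=
    bstep5 _ h01 h02 h03 h04 h12 h13 h14 h23 h24 h34 sYXIZI sYIYYX (by decide) (Or.inr rfl) (by simp <;> ring)
  have sIYIIX : Complex.I • lstr (chain5 v0 v1 v2 v3 v4 0 2 0 0 1) ∈ dla 2 (KbipPlusPendant l m) :=
    bstep5 _ h01 h02 h03 h04 h12 h13 h14 h23 h24 h34 sIZYXI sIXYXX (by decide) (Or.inl rfl) (by simp <;> ring)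
  exact ⟨sIXIIY, sIYIIX⟩

lemma targ4 (l m : ℕ) (hl : 1 < l) (hm : 1 < m) (v0 v1 v2 v3 v4 : Fin (l + m + 1))
    (e0 : (v0 : ℕ) = 0) (e1a : 0 < (v1 : ℕ)) (e1b : (v1 : ℕ) < l)
    (e2 : (v2 : ℕ) = l) (e3 : (v3 : ℕ) = l + 1) (e4 : (v4 : ℕ) = l + m) :
    Complex.I • lstr (chain5 v0 v1 v2 v3 v4 0 1 0 0 1) ∈ dla 4 (KbipPlusPendant l m) ∧ Complex.I • lstr (chain5 v0 v1 v2 v3 v4 0 2 0 0 2) ∈ dla 4 (KbipPlusPendant l m) := by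
  have h01 : v0 ≠ v1 := by simp only [Ne, Fin.ext_iff]; omega
  have h02 : v0 ≠ v2 := by simp only [Ne, Fin.ext_iff]; omega
  have h03 : v0 ≠ v3 := by simp only [Ne, Fin.ext_iff]; omega
  have h04 : v0 ≠ v4 := by simp only [Ne, Fin.ext_iff]; omega
  have h12 : v1 ≠ v2 := by simp only [Ne, Fin.ext_iff]; omega
  have h13 : v1 ≠ v3 := by simp only [Ne, Fin.ext_iff]; omega
  have h14 : v1 ≠ v4 := by simp only [Ne, Fin.ext_iff]; omega
  have h23 : v2 ≠ v3 := by simp only [Ne, Fin.ext_iff]; omega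
  have h24 : v2 ≠ v4 := by simp only [Ne, Fin.ext_iff]; omega
  have h34 : v3 ≠ v4 := by simp only [Ne, Fin.ext_iff]; omega
  have adj02 : (KbipPlusPendant l m).Adj v0 v2 := by
    rw [KbipPlusPendant, SimpleGraph.fromRel_adj]
    exact ⟨h02, by omega⟩
  have adj03 : (KbipPlusPendant l m).Adj v0 v3 := by
    rw [KbipPlusPendant, SimpleGraph.fromRel_adj]
    exact ⟨h03, by omega⟩
  have adj12 : (KbipPlusPendant l m).Adj v1 v2 := by
    rw [KbipPlusPendant, SimpleGraph.fromRel_adj]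
    exact ⟨h12, by omega⟩
  have adj13 : (KbipPlusPendant l m).Adj v1 v3 := by
    rw [KbipPlusPendant, SimpleGraph.fromRel_adj]
    exact ⟨h13, by omega⟩
  have adj04 : (KbipPlusPendant l m).Adj v0 v4 := by
    rw [KbipPlusPendant, SimpleGraph.fromRel_adj]
    exact ⟨h04, by omega⟩
  have sIXXII : Complex.I • lstr (chain5 v0 v1 v2 v3 v4 0 1 1 0 0) ∈ dla 4 (KbipPlusPendant l m) :=
    gen_mem (a := 1) (b := 1) adj12 (by simp [genSet]) (by funext kk; simp only [chain5]; split_ifs <;> first | rfl | (exfalso; simp only [Fin.ext_iff] at *; omega))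
  have sIYIYI : Complex.I • lstr (chain5 v0 v1 v2 v3 v4 0 2 0 2 0) ∈ dla 4 (KbipPlusPendant l m) :=
    gen_mem (a := 2) (b := 2) adj13 (by simp [genSet]) (by funext kk; simp only [chain5]; split_ifs <;> first | rfl | (exfalso; simp only [Fin.ext_iff] at *; omega))
  have sIZXYI : Complex.I • lstr (chain5 v0 v1 v2 v3 v4 0 3 1 2 0) ∈ dla 4 (KbipPlusPendant l m) :=
    bstep5 _ h01 h02 h03 h04 h12 h13 h14 h23 h24 h34 sIXXII sIYIYI (by decide) (Or.inl rfl) (by simp <;> ring)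
  have sIXIXI : Complex.I • lstr (chain5 v0 v1 v2 v3 v4 0 1 0 1 0) ∈ dla 4 (KbipPlusPendant l m) :=
    gen_mem (a := 1) (b := 1) adj13 (by simp [genSet]) (by funext kk; simp only [chain5]; split_ifs <;> first | rfl | (exfalso; simp only [Fin.ext_iff] at *; omega))
  have sIYYII : Complex.I • lstr (chain5 v0 v1 v2 v3 v4 0 2 2 0 0) ∈ dla 4 (KbipPlusPendant l m) :=
    gen_mem (a := 2) (b := 2) adj12 (by simp [genSet]) (by funext kk; simp only [chain5]; split_ifs <;> first | rfl | (exfalso; simp only [Fin.ext_iff] at *; omega))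
  have sIZYXI : Complex.I • lstr (chain5 v0 v1 v2 v3 v4 0 3 2 1 0) ∈ dla 4 (KbipPlusPendant l m) :=
    bstep5 _ h01 h02 h03 h04 h12 h13 h14 h23 h24 h34 sIXIXI sIYYII (by decide) (Or.inl rfl) (by simp <;> ring)
  have sYIIYI : Complex.I • lstr (chain5 v0 v1 v2 v3 v4 2 0 0 2 0) ∈ dla 4 (KbipPlusPendant l m) :=
    gen_mem (a := 2) (b := 2) adj03 (by simp [genSet]) (by funext kk; simp only [chain5]; split_ifs <;> first | rfl | (exfalso; simp only [Fin.ext_iff] at *; omega))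
  have sXIIXI : Complex.I • lstr (chain5 v0 v1 v2 v3 v4 1 0 0 1 0) ∈ dla 4 (KbipPlusPendant l m) :=
    gen_mem (a := 1) (b := 1) adj03 (by simp [genSet]) (by funext kk; simp only [chain5]; split_ifs <;> first | rfl | (exfalso; simp only [Fin.ext_iff] at *; omega))
  have sXIIIX : Complex.I • lstr (chain5 v0 v1 v2 v3 v4 1 0 0 0 1) ∈ dla 4 (KbipPlusPendant l m) :=
    gen_mem (a := 1) (b := 1) adj04 (by simp [genSet]) (by funext kk; simp only [chain5]; split_ifs <;> first | rfl | (exfalso; simp only [Fin.ext_iff] at *; omega))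
  have sYIYII : Complex.I • lstr (chain5 v0 v1 v2 v3 v4 2 0 2 0 0) ∈ dla 4 (KbipPlusPendant l m) :=
    gen_mem (a := 2) (b := 2) adj02 (by simp [genSet]) (by funext kk; simp only [chain5]; split_ifs <;> first | rfl | (exfalso; simp only [Fin.ext_iff] at *; omega))
  have sYXZII : Complex.I • lstr (chain5 v0 v1 v2 v3 v4 2 1 3 0 0) ∈ dla 4 (KbipPlusPendant l m) :=
    bstep5 _ h01 h02 h03 h04 h12 h13 h14 h23 h24 h34 sIXXII sYIYII (by decide) (Or.inl rfl) (by simp <;> ring)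
  have sZXZIX : Complex.I • lstr (chain5 v0 v1 v2 v3 v4 3 1 3 0 1) ∈ dla 4 (KbipPlusPendant l m) :=
    bstep5 _ h01 h02 h03 h04 h12 h13 h14 h23 h24 h34 sXIIIX sYXZII (by decide) (Or.inl rfl) (by simp <;> ring)
  have sYXZXX : Complex.I • lstr (chain5 v0 v1 v2 v3 v4 2 1 3 1 1) ∈ dla 4 (KbipPlusPendant l m) :=
    bstep5 _ h01 h02 h03 h04 h12 h13 h14 h23 h24 h34 sXIIXI sZXZIX (by decide) (Or.inr rfl) (by simp <;> ring)
  have sIXZZX : Complex.I • lstr (chain5 v0 v1 v2 v3 v4 0 1 3 3 1) ∈ dla 4 (KbipPlusPendant l m) :=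
    bstep5 _ h01 h02 h03 h04 h12 h13 h14 h23 h24 h34 sYIIYI sYXZXX (by decide) (Or.inr rfl) (by simp <;> ring)
  have sIYXYX : Complex.I • lstr (chain5 v0 v1 v2 v3 v4 0 2 1 2 1) ∈ dla 4 (KbipPlusPendant l m) :=
    bstep5 _ h01 h02 h03 h04 h12 h13 h14 h23 h24 h34 sIZYXI sIXZZX (by decide) (Or.inl rfl) (by simp <;> ring)
  have sIXIIX : Complex.I • lstr (chain5 v0 v1 v2 v3 v4 0 1 0 0 1) ∈ dla 4 (KbipPlusPendant l m) :=
    bstep5 _ h01 h02 h03 h04 h12 h13 h14 h23 h24 h34 sIZXYI sIYXYX (by decide) (Or.inr rfl) (by simp <;> ring)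
  have sYXIZI : Complex.I • lstr (chain5 v0 v1 v2 v3 v4 2 1 0 3 0) ∈ dla 4 (KbipPlusPendant l m) :=
    bstep5 _ h01 h02 h03 h04 h12 h13 h14 h23 h24 h34 sIXIXI sYIIYI (by decide) (Or.inl rfl) (by simp <;> ring)
  have sXIXII : Complex.I • lstr (chain5 v0 v1 v2 v3 v4 1 0 1 0 0) ∈ dla 4 (KbipPlusPendant l m) :=
    gen_mem (a := 1) (b := 1) adj02 (by simp [genSet]) (by funext kk; simp only [chain5]; split_ifs <;> first | rfl | (exfalso; simp only [Fin.ext_iff] at *; omega))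
  have sYIIIY : Complex.I • lstr (chain5 v0 v1 v2 v3 v4 2 0 0 0 2) ∈ dla 4 (KbipPlusPendant l m) :=
    gen_mem (a := 2) (b := 2) adj04 (by simp [genSet]) (by funext kk; simp only [chain5]; split_ifs <;> first | rfl | (exfalso; simp only [Fin.ext_iff] at *; omega))
  have sZIIXY : Complex.I • lstr (chain5 v0 v1 v2 v3 v4 3 0 0 1 2) ∈ dla 4 (KbipPlusPendant l m) :=
    bstep5 _ h01 h02 h03 h04 h12 h13 h14 h23 h24 h34 sXIIXI sYIIIY (by decide) (Or.inl rfl) (by simp <;> ring)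
  have sYIXXY : Complex.I • lstr (chain5 v0 v1 v2 v3 v4 2 0 1 1 2) ∈ dla 4 (KbipPlusPendant l m) :=
    bstep5 _ h01 h02 h03 h04 h12 h13 h14 h23 h24 h34 sXIXII sZIIXY (by decide) (Or.inr rfl) (by simp <;> ring)
  have sIXXYY : Complex.I • lstr (chain5 v0 v1 v2 v3 v4 0 1 1 2 2) ∈ dla 4 (KbipPlusPendant l m) :=
    bstep5 _ h01 h02 h03 h04 h12 h13 h14 h23 h24 h34 sYXIZI sYIXXY (by decide) (Or.inl rfl) (by simp <;> ring)
  have sIYIIY : Complex.I • lstr (chain5 v0 v1 v2 v3 v4 0 2 0 0 2) ∈ dla 4 (KbipPlusPendant l m) :=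
    bstep5 _ h01 h02 h03 h04 h12 h13 h14 h23 h24 h34 sIZXYI sIXXYY (by decide) (Or.inl rfl) (by simp <;> ring)
  exact ⟨sIXIIX, sIYIIY⟩

lemma targ6 (l m : ℕ) (hl : 1 < l) (hm : 1 < m) (v0 v1 v2 v3 v4 : Fin (l + m + 1))
    (e0 : (v0 : ℕ) = 0) (e1a : 0 < (v1 : ℕ)) (e1b : (v1 : ℕ) < l)
    (e2 : (v2 : ℕ) = l) (e3 : (v3 : ℕ) = l + 1) (e4 : (v4 : ℕ) = l + m) :
    Complex.I • lstr (chain5 v0 v1 v2 v3 v4 0 1 0 0 1) ∈ dla 6 (KbipPlusPendant l m) ∧ Complex.I • lstr (chain5 v0 v1 v2 v3 v4 0 2 0 0 3) ∈ dla 6 (KbipPlusPendant l m) ∧ Complex.I • lstr (chain5 v0 v1 v2 v3 v4 0 3 0 0 2) ∈ dla 6 (KbipPlusPendant l m) := by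
  have h01 : v0 ≠ v1 := by simp only [Ne, Fin.ext_iff]; omega
  have h02 : v0 ≠ v2 := by simp only [Ne, Fin.ext_iff]; omega
  have h03 : v0 ≠ v3 := by simp only [Ne, Fin.ext_iff]; omega
  have h04 : v0 ≠ v4 := by simp only [Ne, Fin.ext_iff]; omega
  have h12 : v1 ≠ v2 := by simp only [Ne, Fin.ext_iff]; omega
  have h13 : v1 ≠ v3 := by simp only [Ne, Fin.ext_iff]; omega
  have h14 : v1 ≠ v4 := by simp only [Ne, Fin.ext_iff]; omega
  have h23 : v2 ≠ v3 := by simp only [Ne, Fin.ext_iff]; omega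
  have h24 : v2 ≠ v4 := by simp only [Ne, Fin.ext_iff]; omega
  have h34 : v3 ≠ v4 := by simp only [Ne, Fin.ext_iff]; omega
  have adj02 : (KbipPlusPendant l m).Adj v0 v2 := by
    rw [KbipPlusPendant, SimpleGraph.fromRel_adj]
    exact ⟨h02, by omega⟩
  have adj03 : (KbipPlusPendant l m).Adj v0 v3 := by
    rw [KbipPlusPendant, SimpleGraph.fromRel_adj]
    exact ⟨h03, by omega⟩
  have adj12 : (KbipPlusPendant l m).Adj v1 v2 := by
    rw [KbipPlusPendant, SimpleGraph.fromRel_adj]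
    exact ⟨h12, by omega⟩
  have adj13 : (KbipPlusPendant l m).Adj v1 v3 := by
    rw [KbipPlusPendant, SimpleGraph.fromRel_adj]
    exact ⟨h13, by omega⟩
  have adj04 : (KbipPlusPendant l m).Adj v0 v4 := by
    rw [KbipPlusPendant, SimpleGraph.fromRel_adj]
    exact ⟨h04, by omega⟩
  have sZIIIY : Complex.I • lstr (chain5 v0 v1 v2 v3 v4 3 0 0 0 2) ∈ dla 6 (KbipPlusPendant l m) :=
    gen_mem (a := 3) (b := 2) adj04 (by simp [genSet]) (by funext kk; simp only [chain5]; split_ifs <;> first | rfl | (exfalso; simp only [Fin.ext_iff] at *; omega))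
  have sYIIIZ : Complex.I • lstr (chain5 v0 v1 v2 v3 v4 2 0 0 0 3) ∈ dla 6 (KbipPlusPendant l m) :=
    gen_mem (a := 2) (b := 3) adj04 (by simp [genSet]) (by funext kk; simp only [chain5]; split_ifs <;> first | rfl | (exfalso; simp only [Fin.ext_iff] at *; omega))
  have sIZIYI : Complex.I • lstr (chain5 v0 v1 v2 v3 v4 0 3 0 2 0) ∈ dla 6 (KbipPlusPendant l m) :=
    gen_mem (a := 3) (b := 2) adj13 (by simp [genSet]) (by funext kk; simp only [chain5]; split_ifs <;> first | rfl | (exfalso; simp only [Fin.ext_iff] at *; omega))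
  have sIYIZI : Complex.I • lstr (chain5 v0 v1 v2 v3 v4 0 2 0 3 0) ∈ dla 6 (KbipPlusPendant l m) :=
    gen_mem (a := 2) (b := 3) adj13 (by simp [genSet]) (by funext kk; simp only [chain5]; split_ifs <;> first | rfl | (exfalso; simp only [Fin.ext_iff] at *; omega))
  have sXIIXI : Complex.I • lstr (chain5 v0 v1 v2 v3 v4 1 0 0 1 0) ∈ dla 6 (KbipPlusPendant l m) :=
    gen_mem (a := 1) (b := 1) adj03 (by simp [genSet]) (by funext kk; simp only [chain5]; split_ifs <;> first | rfl | (exfalso; simp only [Fin.ext_iff] at *; omega))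
  have sXYIYI : Complex.I • lstr (chain5 v0 v1 v2 v3 v4 1 2 0 2 0) ∈ dla 6 (KbipPlusPendant l m) :=
    bstep5 _ h01 h02 h03 h04 h12 h13 h14 h23 h24 h34 sIYIZI sXIIXI (by decide) (Or.inl rfl) (by simp <;> ring)
  have sXXIII : Complex.I • lstr (chain5 v0 v1 v2 v3 v4 1 1 0 0 0) ∈ dla 6 (KbipPlusPendant l m) :=
    bstep5 _ h01 h02 h03 h04 h12 h13 h14 h23 h24 h34 sIZIYI sXYIYI (by decide) (Or.inr rfl) (by simp <;> ring)
  have sZXIIZ : Complex.I • lstr (chain5 v0 v1 v2 v3 v4 3 1 0 0 3) ∈ dla 6 (KbipPlusPendant l m) :=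
    bstep5 _ h01 h02 h03 h04 h12 h13 h14 h23 h24 h34 sYIIIZ sXXIII (by decide) (Or.inr rfl) (by simp <;> ring)
  have sIXIIX : Complex.I • lstr (chain5 v0 v1 v2 v3 v4 0 1 0 0 1) ∈ dla 6 (KbipPlusPendant l m) :=
    bstep5 _ h01 h02 h03 h04 h12 h13 h14 h23 h24 h34 sZIIIY sZXIIZ (by decide) (Or.inl rfl) (by simp <;> ring)
  have sXIIIX : Complex.I • lstr (chain5 v0 v1 v2 v3 v4 1 0 0 0 1) ∈ dla 6 (KbipPlusPendant l m) :=
    gen_mem (a := 1) (b := 1) adj04 (by simp [genSet]) (by funext kk; simp only [chain5]; split_ifs <;> first | rfl | (exfalso; simp only [Fin.ext_iff] at *; omega))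
  have sIXIXI : Complex.I • lstr (chain5 v0 v1 v2 v3 v4 0 1 0 1 0) ∈ dla 6 (KbipPlusPendant l m) :=
    gen_mem (a := 1) (b := 1) adj13 (by simp [genSet]) (by funext kk; simp only [chain5]; split_ifs <;> first | rfl | (exfalso; simp only [Fin.ext_iff] at *; omega))
  have sYIIZI : Complex.I • lstr (chain5 v0 v1 v2 v3 v4 2 0 0 3 0) ∈ dla 6 (KbipPlusPendant l m) :=
    gen_mem (a := 2) (b := 3) adj03 (by simp [genSet]) (by funext kk; simp only [chain5]; split_ifs <;> first | rfl | (exfalso; simp only [Fin.ext_iff] at *; omega))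
  have sYXIYI : Complex.I • lstr (chain5 v0 v1 v2 v3 v4 2 1 0 2 0) ∈ dla 6 (KbipPlusPendant l m) :=
    bstep5 _ h01 h02 h03 h04 h12 h13 h14 h23 h24 h34 sIXIXI sYIIZI (by decide) (Or.inr rfl) (by simp <;> ring)
  have sYYIII : Complex.I • lstr (chain5 v0 v1 v2 v3 v4 2 2 0 0 0) ∈ dla 6 (KbipPlusPendant l m) :=
    bstep5 _ h01 h02 h03 h04 h12 h13 h14 h23 h24 h34 sIZIYI sYXIYI (by decide) (Or.inl rfl) (by simp <;> ring)
  have sZYIIX : Complex.I • lstr (chain5 v0 v1 v2 v3 v4 3 2 0 0 1) ∈ dla 6 (KbipPlusPendant l m) :=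
    bstep5 _ h01 h02 h03 h04 h12 h13 h14 h23 h24 h34 sXIIIX sYYIII (by decide) (Or.inl rfl) (by simp <;> ring)
  have sIYIIZ : Complex.I • lstr (chain5 v0 v1 v2 v3 v4 0 2 0 0 3) ∈ dla 6 (KbipPlusPendant l m) :=
    bstep5 _ h01 h02 h03 h04 h12 h13 h14 h23 h24 h34 sZIIIY sZYIIX (by decide) (Or.inr rfl) (by simp <;> ring)
  have sZIIYI : Complex.I • lstr (chain5 v0 v1 v2 v3 v4 3 0 0 2 0) ∈ dla 6 (KbipPlusPendant l m) :=
    gen_mem (a := 3) (b := 2) adj03 (by simp [genSet]) (by funext kk; simp only [chain5]; split_ifs <;> first | rfl | (exfalso; simp only [Fin.ext_iff] at *; omega))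
  have sZXIZI : Complex.I • lstr (chain5 v0 v1 v2 v3 v4 3 1 0 3 0) ∈ dla 6 (KbipPlusPendant l m) :=
    bstep5 _ h01 h02 h03 h04 h12 h13 h14 h23 h24 h34 sIXIXI sZIIYI (by decide) (Or.inl rfl) (by simp <;> ring)
  have sZZIII : Complex.I • lstr (chain5 v0 v1 v2 v3 v4 3 3 0 0 0) ∈ dla 6 (KbipPlusPendant l m) :=
    bstep5 _ h01 h02 h03 h04 h12 h13 h14 h23 h24 h34 sIYIZI sZXIZI (by decide) (Or.inr rfl) (by simp <;> ring)
  have sYZIIX : Complex.I • lstr (chain5 v0 v1 v2 v3 v4 2 3 0 0 1) ∈ dla 6 (KbipPlusPendant l m) :=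
    bstep5 _ h01 h02 h03 h04 h12 h13 h14 h23 h24 h34 sXIIIX sZZIII (by decide) (Or.inr rfl) (by simp <;> ring)
  have sIZIIY : Complex.I • lstr (chain5 v0 v1 v2 v3 v4 0 3 0 0 2) ∈ dla 6 (KbipPlusPendant l m) :=
    bstep5 _ h01 h02 h03 h04 h12 h13 h14 h23 h24 h34 sYIIIZ sYZIIX (by decide) (Or.inl rfl) (by simp <;> ring)
  exact ⟨sIXIIX, sIYIIZ, sIZIIY⟩

lemma targ14 (l m : ℕ) (hl : 1 < l) (hm : 1 < m) (v0 v1 v2 v3 v4 : Fin (l + m + 1))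
    (e0 : (v0 : ℕ) = 0) (e1a : 0 < (v1 : ℕ)) (e1b : (v1 : ℕ) < l)
    (e2 : (v2 : ℕ) = l) (e3 : (v3 : ℕ) = l + 1) (e4 : (v4 : ℕ) = l + m) :
    Complex.I • lstr (chain5 v0 v1 v2 v3 v4 0 1 0 0 1) ∈ dla 14 (KbipPlusPendant l m) ∧ Complex.I • lstr (chain5 v0 v1 v2 v3 v4 0 2 0 0 2) ∈ dla 14 (KbipPlusPendant l m) ∧ Complex.I • lstr (chain5 v0 v1 v2 v3 v4 0 1 0 0 2) ∈ dla 14 (KbipPlusPendant l m) ∧ Complex.I • lstr (chain5 v0 v1 v2 v3 v4 0 2 0 0 1) ∈ dla 14 (KbipPlusPendant l m) := by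
  have h01 : v0 ≠ v1 := by simp only [Ne, Fin.ext_iff]; omega
  have h02 : v0 ≠ v2 := by simp only [Ne, Fin.ext_iff]; omega
  have h03 : v0 ≠ v3 := by simp only [Ne, Fin.ext_iff]; omega
  have h04 : v0 ≠ v4 := by simp only [Ne, Fin.ext_iff]; omega
  have h12 : v1 ≠ v2 := by simp only [Ne, Fin.ext_iff]; omega
  have h13 : v1 ≠ v3 := by simp only [Ne, Fin.ext_iff]; omega
  have h14 : v1 ≠ v4 := by simp only [Ne, Fin.ext_iff]; omega
  have h23 : v2 ≠ v3 := by simp only [Ne, Fin.ext_iff]; omega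
  have h24 : v2 ≠ v4 := by simp only [Ne, Fin.ext_iff]; omega
  have h34 : v3 ≠ v4 := by simp only [Ne, Fin.ext_iff]; omega
  have adj02 : (KbipPlusPendant l m).Adj v0 v2 := by
    rw [KbipPlusPendant, SimpleGraph.fromRel_adj]
    exact ⟨h02, by omega⟩
  have adj03 : (KbipPlusPendant l m).Adj v0 v3 := by
    rw [KbipPlusPendant, SimpleGraph.fromRel_adj]
    exact ⟨h03, by omega⟩
  have adj12 : (KbipPlusPendant l m).Adj v1 v2 := by
    rw [KbipPlusPendant, SimpleGraph.fromRel_adj]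
    exact ⟨h12, by omega⟩
  have adj13 : (KbipPlusPendant l m).Adj v1 v3 := by
    rw [KbipPlusPendant, SimpleGraph.fromRel_adj]
    exact ⟨h13, by omega⟩
  have adj04 : (KbipPlusPendant l m).Adj v0 v4 := by
    rw [KbipPlusPendant, SimpleGraph.fromRel_adj]
    exact ⟨h04, by omega⟩
  have sIXIXI : Complex.I • lstr (chain5 v0 v1 v2 v3 v4 0 1 0 1 0) ∈ dla 14 (KbipPlusPendant l m) :=
    gen_mem (a := 1) (b := 1) adj13 (by simp [genSet]) (by funext kk; simp only [chain5]; split_ifs <;> first | rfl | (exfalso; simp only [Fin.ext_iff] at *; omega))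
  have sIYXII : Complex.I • lstr (chain5 v0 v1 v2 v3 v4 0 2 1 0 0) ∈ dla 14 (KbipPlusPendant l m) :=
    gen_mem (a := 2) (b := 1) adj12 (by simp [genSet]) (by funext kk; simp only [chain5]; split_ifs <;> first | rfl | (exfalso; simp only [Fin.ext_iff] at *; omega))
  have sIZXXI : Complex.I • lstr (chain5 v0 v1 v2 v3 v4 0 3 1 1 0) ∈ dla 14 (KbipPlusPendant l m) :=
    bstep5 _ h01 h02 h03 h04 h12 h13 h14 h23 h24 h34 sIXIXI sIYXII (by decide) (Or.inl rfl) (by simp <;> ring)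
  have sYIIYI : Complex.I • lstr (chain5 v0 v1 v2 v3 v4 2 0 0 2 0) ∈ dla 14 (KbipPlusPendant l m) :=
    gen_mem (a := 2) (b := 2) adj03 (by simp [genSet]) (by funext kk; simp only [chain5]; split_ifs <;> first | rfl | (exfalso; simp only [Fin.ext_iff] at *; omega))
  have sXIXII : Complex.I • lstr (chain5 v0 v1 v2 v3 v4 1 0 1 0 0) ∈ dla 14 (KbipPlusPendant l m) :=
    gen_mem (a := 1) (b := 1) adj02 (by simp [genSet]) (by funext kk; simp only [chain5]; split_ifs <;> first | rfl | (exfalso; simp only [Fin.ext_iff] at *; omega))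
  have sXIIIX : Complex.I • lstr (chain5 v0 v1 v2 v3 v4 1 0 0 0 1) ∈ dla 14 (KbipPlusPendant l m) :=
    gen_mem (a := 1) (b := 1) adj04 (by simp [genSet]) (by funext kk; simp only [chain5]; split_ifs <;> first | rfl | (exfalso; simp only [Fin.ext_iff] at *; omega))
  have sIYIXI : Complex.I • lstr (chain5 v0 v1 v2 v3 v4 0 2 0 1 0) ∈ dla 14 (KbipPlusPendant l m) :=
    gen_mem (a := 2) (b := 1) adj13 (by simp [genSet]) (by funext kk; simp only [chain5]; split_ifs <;> first | rfl | (exfalso; simp only [Fin.ext_iff] at *; omega))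
  have sYYIZI : Complex.I • lstr (chain5 v0 v1 v2 v3 v4 2 2 0 3 0) ∈ dla 14 (KbipPlusPendant l m) :=
    bstep5 _ h01 h02 h03 h04 h12 h13 h14 h23 h24 h34 sIYIXI sYIIYI (by decide) (Or.inl rfl) (by simp <;> ring)
  have sZYIZX : Complex.I • lstr (chain5 v0 v1 v2 v3 v4 3 2 0 3 1) ∈ dla 14 (KbipPlusPendant l m) :=
    bstep5 _ h01 h02 h03 h04 h12 h13 h14 h23 h24 h34 sXIIIX sYYIZI (by decide) (Or.inl rfl) (by simp <;> ring)
  have sYYXZX : Complex.I • lstr (chain5 v0 v1 v2 v3 v4 2 2 1 3 1) ∈ dla 14 (KbipPlusPendant l m) :=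
    bstep5 _ h01 h02 h03 h04 h12 h13 h14 h23 h24 h34 sXIXII sZYIZX (by decide) (Or.inr rfl) (by simp <;> ring)
  have sIYXXX : Complex.I • lstr (chain5 v0 v1 v2 v3 v4 0 2 1 1 1) ∈ dla 14 (KbipPlusPendant l m) :=
    bstep5 _ h01 h02 h03 h04 h12 h13 h14 h23 h24 h34 sYIIYI sYYXZX (by decide) (Or.inl rfl) (by simp <;> ring)
  have sIXIIX : Complex.I • lstr (chain5 v0 v1 v2 v3 v4 0 1 0 0 1) ∈ dla 14 (KbipPlusPendant l m) :=
    bstep5 _ h01 h02 h03 h04 h12 h13 h14 h23 h24 h34 sIZXXI sIYXXX (by decide) (Or.inr rfl) (by simp <;> ring)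
  have sXIIIY : Complex.I • lstr (chain5 v0 v1 v2 v3 v4 1 0 0 0 2) ∈ dla 14 (KbipPlusPendant l m) :=
    gen_mem (a := 1) (b := 2) adj04 (by simp [genSet]) (by funext kk; simp only [chain5]; split_ifs <;> first | rfl | (exfalso; simp only [Fin.ext_iff] at *; omega))
  have sYXIZI : Complex.I • lstr (chain5 v0 v1 v2 v3 v4 2 1 0 3 0) ∈ dla 14 (KbipPlusPendant l m) :=
    bstep5 _ h01 h02 h03 h04 h12 h13 h14 h23 h24 h34 sIXIXI sYIIYI (by decide) (Or.inl rfl) (by simp <;> ring)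
  have sZXIZY : Complex.I • lstr (chain5 v0 v1 v2 v3 v4 3 1 0 3 2) ∈ dla 14 (KbipPlusPendant l m) :=
    bstep5 _ h01 h02 h03 h04 h12 h13 h14 h23 h24 h34 sXIIIY sYXIZI (by decide) (Or.inl rfl) (by simp <;> ring)
  have sYXXZY : Complex.I • lstr (chain5 v0 v1 v2 v3 v4 2 1 1 3 2) ∈ dla 14 (KbipPlusPendant l m) :=
    bstep5 _ h01 h02 h03 h04 h12 h13 h14 h23 h24 h34 sXIXII sZXIZY (by decide) (Or.inr rfl) (by simp <;> ring)
  have sIXXXY : Complex.I • lstr (chain5 v0 v1 v2 v3 v4 0 1 1 1 2) ∈ dla 14 (KbipPlusPendant l m) :=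
    bstep5 _ h01 h02 h03 h04 h12 h13 h14 h23 h24 h34 sYIIYI sYXXZY (by decide) (Or.inl rfl) (by simp <;> ring)
  have sIYIIY : Complex.I • lstr (chain5 v0 v1 v2 v3 v4 0 2 0 0 2) ∈ dla 14 (KbipPlusPendant l m) :=
    bstep5 _ h01 h02 h03 h04 h12 h13 h14 h23 h24 h34 sIZXXI sIXXXY (by decide) (Or.inl rfl) (by simp <;> ring)
  have sZYIZY : Complex.I • lstr (chain5 v0 v1 v2 v3 v4 3 2 0 3 2) ∈ dla 14 (KbipPlusPendant l m) :=
    bstep5 _ h01 h02 h03 h04 h12 h13 h14 h23 h24 h34 sXIIIY sYYIZI (by decide) (Or.inl rfl) (by simp <;> ring)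
  have sYYXZY : Complex.I • lstr (chain5 v0 v1 v2 v3 v4 2 2 1 3 2) ∈ dla 14 (KbipPlusPendant l m) :=
    bstep5 _ h01 h02 h03 h04 h12 h13 h14 h23 h24 h34 sXIXII sZYIZY (by decide) (Or.inr rfl) (by simp <;> ring)
  have sIYXXY : Complex.I • lstr (chain5 v0 v1 v2 v3 v4 0 2 1 1 2) ∈ dla 14 (KbipPlusPendant l m) :=
    bstep5 _ h01 h02 h03 h04 h12 h13 h14 h23 h24 h34 sYIIYI sYYXZY (by decide) (Or.inl rfl) (by simp <;> ring)
  have sIXIIY : Complex.I • lstr (chain5 v0 v1 v2 v3 v4 0 1 0 0 2) ∈ dla 14 (KbipPlusPendant l m) :=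
    bstep5 _ h01 h02 h03 h04 h12 h13 h14 h23 h24 h34 sIZXXI sIYXXY (by decide) (Or.inr rfl) (by simp <;> ring)
  have sZXIZX : Complex.I • lstr (chain5 v0 v1 v2 v3 v4 3 1 0 3 1) ∈ dla 14 (KbipPlusPendant l m) :=
    bstep5 _ h01 h02 h03 h04 h12 h13 h14 h23 h24 h34 sXIIIX sYXIZI (by decide) (Or.inl rfl) (by simp <;> ring)
  have sYXXZX : Complex.I • lstr (chain5 v0 v1 v2 v3 v4 2 1 1 3 1) ∈ dla 14 (KbipPlusPendant l m) :=
    bstep5 _ h01 h02 h03 h04 h12 h13 h14 h23 h24 h34 sXIXII sZXIZX (by decide) (Or.inr rfl) (by simp <;> ring)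
  have sIXXXX : Complex.I • lstr (chain5 v0 v1 v2 v3 v4 0 1 1 1 1) ∈ dla 14 (KbipPlusPendant l m) :=
    bstep5 _ h01 h02 h03 h04 h12 h13 h14 h23 h24 h34 sYIIYI sYXXZX (by decide) (Or.inl rfl) (by simp <;> ring)
  have sIYIIX : Complex.I • lstr (chain5 v0 v1 v2 v3 v4 0 2 0 0 1) ∈ dla 14 (KbipPlusPendant l m) :=
    bstep5 _ h01 h02 h03 h04 h12 h13 h14 h23 h24 h34 sIZXXI sIXXXX (by decide) (Or.inl rfl) (by simp <;> ring)
  exact ⟨sIXIIX, sIYIIY, sIXIIY, sIYIIX⟩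

/-- For `l, m > 1` and `k ∈ {2, 4, 6, 14}`, the graph `K_{l,m}` plus a pendant
vertex attached to vertex `1` is `k`-equivalent to `K_{l,m+1}`. -/
theorem dla_KbipPlusPendant_eq_KbipExtended (l m : ℕ) (hl : 1 < l) (hm : 1 < m)
    (k : ℕ) (hk : k ∈ ({2, 4, 6, 14} : Set ℕ)) :
    dla k (KbipPlusPendant l m) = dla k (KbipExtended l m) := by
  apply le_antisymm
  · apply LieSubalgebra.lieSpan_le.mpr
    rintro M ⟨u, v, huv, p, hp, rfl⟩
    rw [KbipPlusPendant, SimpleGraph.fromRel_adj] at huv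
    refine LieSubalgebra.subset_lieSpan ⟨u, v, ?_, p, hp, rfl⟩
    rw [KbipExtended, SimpleGraph.fromRel_adj]
    exact ⟨huv.1, by rcases huv.2 with h | h <;> omega⟩
  · apply LieSubalgebra.lieSpan_le.mpr
    rintro M ⟨u, v, huv, p, hp, rfl⟩
    rw [KbipExtended, SimpleGraph.fromRel_adj] at huv
    obtain ⟨hne, hrel⟩ := huv
    by_cases hG : (KbipPlusPendant l m).Adj u v
    · exact LieSubalgebra.subset_lieSpan ⟨u, v, hG, p, hp, rfl⟩
    · rw [KbipPlusPendant, SimpleGraph.fromRel_adj] at hG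
      push_neg at hG
      have hGr := hG hne
      have hb1 := u.isLt
      have hb2 := v.isLt
      have key : ((u : ℕ) < l ∧ (v : ℕ) = l + m ∧ (u : ℕ) ≠ 0) ∨
          ((v : ℕ) < l ∧ (u : ℕ) = l + m ∧ (v : ℕ) ≠ 0) := by omega
      obtain ⟨z0, e0⟩ : ∃ z : Fin (l + m + 1), (z : ℕ) = 0 := ⟨⟨0, by omega⟩, rfl⟩
      obtain ⟨w2, e2⟩ : ∃ w : Fin (l + m + 1), (w : ℕ) = l := ⟨⟨l, by omega⟩, rfl⟩
      obtain ⟨w3, e3⟩ : ∃ w : Fin (l + m + 1), (w : ℕ) = l + 1 := ⟨⟨l + 1, by omega⟩, rfl⟩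
      simp only [Set.mem_insert_iff, Set.mem_singleton_iff] at hk
      rcases key with ⟨hsm, hbg, h0⟩ | ⟨hsm, hbg, h0⟩
      · rcases hk with rfl | rfl | rfl | rfl
        · have T := targ2 l m hl hm z0 u w2 w3 v e0 (by omega) hsm e2 e3 hbg
          simp only [genSet, Set.mem_insert_iff, Set.mem_singleton_iff] at hp
          rcases hp with rfl | rfl
          · show Complex.I • twoLocal PauliX PauliY u v ∈ dla 2 (KbipPlusPendant l m)
            rw [show twoLocal PauliX PauliY u v = lstr (chain5 z0 u w2 w3 v 0 1 0 0 2) from pauliString_congr (by funext kk; simp only [chain5]; split_ifs <;> first | rfl | (exfalso; simp only [Fin.ext_iff] at *; omega))]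
            exact T.1
          · show Complex.I • twoLocal PauliY PauliX u v ∈ dla 2 (KbipPlusPendant l m)
            rw [show twoLocal PauliY PauliX u v = lstr (chain5 z0 u w2 w3 v 0 2 0 0 1) from pauliString_congr (by funext kk; simp only [chain5]; split_ifs <;> first | rfl | (exfalso; simp only [Fin.ext_iff] at *; omega))]
            exact T.2
        · have T := targ4 l m hl hm z0 u w2 w3 v e0 (by omega) hsm e2 e3 hbg
          simp only [genSet, Set.mem_insert_iff, Set.mem_singleton_iff] at hp
          rcases hp with rfl | rfl
          · show Complex.I • twoLocal PauliX PauliX u v ∈ dla 4 (KbipPlusPendant l m)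
            rw [show twoLocal PauliX PauliX u v = lstr (chain5 z0 u w2 w3 v 0 1 0 0 1) from pauliString_congr (by funext kk; simp only [chain5]; split_ifs <;> first | rfl | (exfalso; simp only [Fin.ext_iff] at *; omega))]
            exact T.1
          · show Complex.I • twoLocal PauliY PauliY u v ∈ dla 4 (KbipPlusPendant l m)
            rw [show twoLocal PauliY PauliY u v = lstr (chain5 z0 u w2 w3 v 0 2 0 0 2) from pauliString_congr (by funext kk; simp only [chain5]; split_ifs <;> first | rfl | (exfalso; simp only [Fin.ext_iff] at *; omega))]
            exact T.2
        · have T := targ6 l m hl hm z0 u w2 w3 v e0 (by omega) hsm e2 e3 hbg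
          simp only [genSet, Set.mem_insert_iff, Set.mem_singleton_iff] at hp
          rcases hp with rfl | rfl | rfl
          · show Complex.I • twoLocal PauliX PauliX u v ∈ dla 6 (KbipPlusPendant l m)
            rw [show twoLocal PauliX PauliX u v = lstr (chain5 z0 u w2 w3 v 0 1 0 0 1) from pauliString_congr (by funext kk; simp only [chain5]; split_ifs <;> first | rfl | (exfalso; simp only [Fin.ext_iff] at *; omega))]
            exact T.1
          · show Complex.I • twoLocal PauliY PauliZ u v ∈ dla 6 (KbipPlusPendant l m)
            rw [show twoLocal PauliY PauliZ u v = lstr (chain5 z0 u w2 w3 v 0 2 0 0 3) from pauliString_congr (by funext kk; simp only [chain5]; split_ifs <;> first | rfl | (exfalso; simp only [Fin.ext_iff] at *; omega))]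
            exact T.2.1
          · show Complex.I • twoLocal PauliZ PauliY u v ∈ dla 6 (KbipPlusPendant l m)
            rw [show twoLocal PauliZ PauliY u v = lstr (chain5 z0 u w2 w3 v 0 3 0 0 2) from pauliString_congr (by funext kk; simp only [chain5]; split_ifs <;> first | rfl | (exfalso; simp only [Fin.ext_iff] at *; omega))]
            exact T.2.2
        · have T := targ14 l m hl hm z0 u w2 w3 v e0 (by omega) hsm e2 e3 hbg
          simp only [genSet, Set.mem_insert_iff, Set.mem_singleton_iff] at hp
          rcases hp with rfl | rfl | rfl | rfl
          · show Complex.I • twoLocal PauliX PauliX u v ∈ dla 14 (KbipPlusPendant l m)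
            rw [show twoLocal PauliX PauliX u v = lstr (chain5 z0 u w2 w3 v 0 1 0 0 1) from pauliString_congr (by funext kk; simp only [chain5]; split_ifs <;> first | rfl | (exfalso; simp only [Fin.ext_iff] at *; omega))]
            exact T.1
          · show Complex.I • twoLocal PauliY PauliY u v ∈ dla 14 (KbipPlusPendant l m)
            rw [show twoLocal PauliY PauliY u v = lstr (chain5 z0 u w2 w3 v 0 2 0 0 2) from pauliString_congr (by funext kk; simp only [chain5]; split_ifs <;> first | rfl | (exfalso; simp only [Fin.ext_iff] at *; omega))]
            exact T.2.1
          · show Complex.I • twoLocal PauliX PauliY u v ∈ dla 14 (KbipPlusPendant l m)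
            rw [show twoLocal PauliX PauliY u v = lstr (chain5 z0 u w2 w3 v 0 1 0 0 2) from pauliString_congr (by funext kk; simp only [chain5]; split_ifs <;> first | rfl | (exfalso; simp only [Fin.ext_iff] at *; omega))]
            exact T.2.2.1
          · show Complex.I • twoLocal PauliY PauliX u v ∈ dla 14 (KbipPlusPendant l m)
            rw [show twoLocal PauliY PauliX u v = lstr (chain5 z0 u w2 w3 v 0 2 0 0 1) from pauliString_congr (by funext kk; simp only [chain5]; split_ifs <;> first | rfl | (exfalso; simp only [Fin.ext_iff] at *; omega))]
            exact T.2.2.2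
      · rcases hk with rfl | rfl | rfl | rfl
        · have T := targ2 l m hl hm z0 v w2 w3 u e0 (by omega) hsm e2 e3 hbg
          simp only [genSet, Set.mem_insert_iff, Set.mem_singleton_iff] at hp
          rcases hp with rfl | rfl
          · show Complex.I • twoLocal PauliX PauliY u v ∈ dla 2 (KbipPlusPendant l m)
            rw [show twoLocal PauliX PauliY u v = lstr (chain5 z0 v w2 w3 u 0 2 0 0 1) from pauliString_congr (by funext kk; simp only [chain5]; split_ifs <;> first | rfl | (exfalso; simp only [Fin.ext_iff] at *; omega))]
            exact T.2
          · show Complex.I • twoLocal PauliY PauliX u v ∈ dla 2 (KbipPlusPendant l m)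
            rw [show twoLocal PauliY PauliX u v = lstr (chain5 z0 v w2 w3 u 0 1 0 0 2) from pauliString_congr (by funext kk; simp only [chain5]; split_ifs <;> first | rfl | (exfalso; simp only [Fin.ext_iff] at *; omega))]
            exact T.1
        · have T := targ4 l m hl hm z0 v w2 w3 u e0 (by omega) hsm e2 e3 hbg
          simp only [genSet, Set.mem_insert_iff, Set.mem_singleton_iff] at hp
          rcases hp with rfl | rfl
          · show Complex.I • twoLocal PauliX PauliX u v ∈ dla 4 (KbipPlusPendant l m)
            rw [show twoLocal PauliX PauliX u v = lstr (chain5 z0 v w2 w3 u 0 1 0 0 1) from pauliString_congr (by funext kk; simp only [chain5]; split_ifs <;> first | rfl | (exfalso; simp only [Fin.ext_iff] at *; omega))]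
            exact T.1
          · show Complex.I • twoLocal PauliY PauliY u v ∈ dla 4 (KbipPlusPendant l m)
            rw [show twoLocal PauliY PauliY u v = lstr (chain5 z0 v w2 w3 u 0 2 0 0 2) from pauliString_congr (by funext kk; simp only [chain5]; split_ifs <;> first | rfl | (exfalso; simp only [Fin.ext_iff] at *; omega))]
            exact T.2
        · have T := targ6 l m hl hm z0 v w2 w3 u e0 (by omega) hsm e2 e3 hbg
          simp only [genSet, Set.mem_insert_iff, Set.mem_singleton_iff] at hp
          rcases hp with rfl | rfl | rfl
          · show Complex.I • twoLocal PauliX PauliX u v ∈ dla 6 (KbipPlusPendant l m)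
            rw [show twoLocal PauliX PauliX u v = lstr (chain5 z0 v w2 w3 u 0 1 0 0 1) from pauliString_congr (by funext kk; simp only [chain5]; split_ifs <;> first | rfl | (exfalso; simp only [Fin.ext_iff] at *; omega))]
            exact T.1
          · show Complex.I • twoLocal PauliY PauliZ u v ∈ dla 6 (KbipPlusPendant l m)
            rw [show twoLocal PauliY PauliZ u v = lstr (chain5 z0 v w2 w3 u 0 3 0 0 2) from pauliString_congr (by funext kk; simp only [chain5]; split_ifs <;> first | rfl | (exfalso; simp only [Fin.ext_iff] at *; omega))]
            exact T.2.2
          · show Complex.I • twoLocal PauliZ PauliY u v ∈ dla 6 (KbipPlusPendant l m)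
            rw [show twoLocal PauliZ PauliY u v = lstr (chain5 z0 v w2 w3 u 0 2 0 0 3) from pauliString_congr (by funext kk; simp only [chain5]; split_ifs <;> first | rfl | (exfalso; simp only [Fin.ext_iff] at *; omega))]
            exact T.2.1
        · have T := targ14 l m hl hm z0 v w2 w3 u e0 (by omega) hsm e2 e3 hbg
          simp only [genSet, Set.mem_insert_iff, Set.mem_singleton_iff] at hp
          rcases hp with rfl | rfl | rfl | rfl
          · show Complex.I • twoLocal PauliX PauliX u v ∈ dla 14 (KbipPlusPendant l m)
            rw [show twoLocal PauliX PauliX u v = lstr (chain5 z0 v w2 w3 u 0 1 0 0 1) from pauliString_congr (by funext kk; simp only [chain5]; split_ifs <;> first | rfl | (exfalso; simp only [Fin.ext_iff] at *; omega))]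
            exact T.1
          · show Complex.I • twoLocal PauliY PauliY u v ∈ dla 14 (KbipPlusPendant l m)
            rw [show twoLocal PauliY PauliY u v = lstr (chain5 z0 v w2 w3 u 0 2 0 0 2) from pauliString_congr (by funext kk; simp only [chain5]; split_ifs <;> first | rfl | (exfalso; simp only [Fin.ext_iff] at *; omega))]
            exact T.2.1
          · show Complex.I • twoLocal PauliX PauliY u v ∈ dla 14 (KbipPlusPendant l m)
            rw [show twoLocal PauliX PauliY u v = lstr (chain5 z0 v w2 w3 u 0 2 0 0 1) from pauliString_congr (by funext kk; simp only [chain5]; split_ifs <;> first | rfl | (exfalso; simp only [Fin.ext_iff] at *; omega))]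
            exact T.2.2.2
          · show Complex.I • twoLocal PauliY PauliX u v ∈ dla 14 (KbipPlusPendant l m)
            rw [show twoLocal PauliY PauliX u v = lstr (chain5 z0 v w2 w3 u 0 1 0 0 2) from pauliString_congr (by funext kk; simp only [chain5]; split_ifs <;> first | rfl | (exfalso; simp only [Fin.ext_iff] at *; omega))]
            exact T.2.2.1
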